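/- With notation as in the s-relation lemma (same quotient space, same operators), the i-relation holds: ω_{(i+1)jknms} = −((5i + s + 1)/(5π))·ω_{ijknms} − (1/5)·ω_{ijknm(s+1)} for all i,j,k,n,m,s ≥ 0, and consequently δω_{ijknms} = 5i·ω_{ijknms} + 5π·ω_{(i+1)jknms}. -/

import Mathlib

/-! The twisted relative de Rham complex for the quintic family: we work in
`L = K[x₀,…,x₄,t][λ^{±1}]`, realized as Laurent polynomials in `λ` over the
multivariate polynomial ring `A = K[x₀,…,x₄,t]` (variables `0,…,4` are `x₀,…,x₄`
and variable `5` is `t`), modulo the span of the images of the operators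
`D_r = ∂_{x_r} + πt(5λx_r⁴ + x₀⋯x̂_r⋯x₄)` and `D_t = ∂_t + πφ_λ`,
where `φ_λ = λ(Σ x_r⁵) + x₀x₁x₂x₃x₄`. -/

noncomputable section

open MvPolynomial
local notation "Cλ" => LaurentPolynomial.C
local notation "Tλ" => LaurentPolynomial.T

variable {K : Type*}

/-- The coefficient ring `A = K[x₀,…,x₄,t]`. -/
abbrev A (K : Type*) [Field K] := MvPolynomial (Fin 6) K

/-- `L = A[λ^{±1}]`. -/
abbrev L (K : Type*) [Field K] := LaurentPolynomial (A K)

variable [Field K] [CharZero K]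

/-- `t`. -/
def tA : A K := X 5
/-- `x = x₀x₁x₂x₃x₄`. -/
def xprod : A K := ∏ r : Fin 5, X r.castSucc
/-- `Σ_r x_r⁵`. -/
def sumx5 : A K := ∑ r : Fin 5, X r.castSucc ^ 5

/-- Partial derivative `∂` (in one of the variables `x₀,…,x₄,t`) extended
coefficientwise to `L`. -/
def pdL (r : Fin 6) (f : L K) : L K :=
  AddMonoidAlgebra.ofCoeff (Finsupp.mapRange (⇑(pderiv r)) (map_zero _) f.coeff)

/-- `λ ∂_λ` on `L`. -/
def lamDlam (f : L K) : L K :=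
  AddMonoidAlgebra.ofCoeff (f.coeff.sum fun n a => Finsupp.single n (n • a))

/-- The operator `D_r = ∂_{x_r} + πt(5λx_r⁴ + x₀⋯x̂_r⋯x₄)`. -/
def Dx (π : K) (r : Fin 5) (f : L K) : L K :=
  pdL r.castSucc f +
    Cλ (MvPolynomial.C π * tA) *
      ((5 : L K) * Tλ 1 * Cλ (X r.castSucc ^ 4) +
        Cλ (∏ j ∈ Finset.univ.erase r, X j.castSucc)) * f

/-- The operator `D_t = ∂_t + πφ_λ` with `φ_λ = λ(Σ x_r⁵) + x₀⋯x₄`. -/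
def Dt (π : K) (f : L K) : L K :=
  pdL 5 f + Cλ (MvPolynomial.C π) * (Tλ 1 * Cλ sumx5 + Cλ xprod) * f

/-- `δ = λ∂_λ + πtλ(Σ x_r⁵)`. -/
def δop (π : K) (f : L K) : L K :=
  lamDlam f + Cλ (MvPolynomial.C π * tA * sumx5) * Tλ 1 * f

/-- The subspace spanned by the images of `D₀, …, D₄` and `D_t`. -/
def N (π : K) : Submodule K (L K) :=
  Submodule.span K ((⋃ r : Fin 5, Set.range (Dx π r)) ∪ Set.range (Dt π))

/-- `ω_{ijknms} = (λtx₀⁵)^i (λtx₁⁵)^j (λtx₂⁵)^k (λtx₃⁵)^n (λtx₄⁵)^m (tx)^s`. -/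
def ωc (i j k n m s : ℕ) : L K :=
  (Tλ 1 * Cλ (tA * X (0 : Fin 5).castSucc ^ 5)) ^ i *
    (Tλ 1 * Cλ (tA * X (1 : Fin 5).castSucc ^ 5)) ^ j *
    (Tλ 1 * Cλ (tA * X (2 : Fin 5).castSucc ^ 5)) ^ k *
    (Tλ 1 * Cλ (tA * X (3 : Fin 5).castSucc ^ 5)) ^ n *
    (Tλ 1 * Cλ (tA * X (4 : Fin 5).castSucc ^ 5)) ^ m *
    Cλ (tA * xprod) ^ s

def P (e c0 c1 c2 c3 c4 : ℕ) : A K :=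
  X 5 ^ e * X (0 : Fin 5).castSucc ^ c0 * X (1 : Fin 5).castSucc ^ c1 *
    X (2 : Fin 5).castSucc ^ c2 * X (3 : Fin 5).castSucc ^ c3 * X (4 : Fin 5).castSucc ^ c4

omit [CharZero K] in
lemma TC_pow (a : A K) (i : ℕ) : (Tλ 1 * Cλ a) ^ i = Cλ (a ^ i) * Tλ (i : ℤ) := by
  rw [mul_pow, ← map_pow, LaurentPolynomial.T_pow, mul_one, mul_comm]

omit [CharZero K] in
lemma CC (a b : A K) (p q : ℤ) :
    (Cλ a * Tλ p) * (Cλ b * Tλ q) = Cλ (a * b) * Tλ (p + q) := by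
  rw [LaurentPolynomial.T_add, map_mul]; ring

omit [CharZero K] in
lemma ωc_eq (i j k n m s : ℕ) : (ωc i j k n m s : L K) =
    Cλ (P (i+j+k+n+m+s) (5*i+s) (5*j+s) (5*k+s) (5*n+s) (5*m+s)) *
      Tλ ((i : ℤ) + j + k + n + m) := by
  simp only [ωc, TC_pow]
  rw [show ((Cλ (tA * xprod)) ^ s : L K) = Cλ ((tA*xprod)^s) * Tλ 0 by
    rw [← map_pow]; simp]
  rw [CC, CC, CC, CC, CC]
  norm_num [-mul_eq_mul_right_iff]
  congr 1
  simp only [P, tA, xprod, Fin.prod_univ_five, mul_pow, map_mul, map_pow,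
    show ((0:Fin 5).castSucc = (0:Fin 6)) from rfl, show ((1:Fin 5).castSucc = (1:Fin 6)) from rfl,
    show ((2:Fin 5).castSucc = (2:Fin 6)) from rfl, show ((3:Fin 5).castSucc = (3:Fin 6)) from rfl,
    show ((4:Fin 5).castSucc = (4:Fin 6)) from rfl]
  ring




omit [CharZero K] in
lemma pdL_single (r : Fin 6) (p : ℤ) (a : A K) :
    pdL r (Cλ a * Tλ p) = Cλ (pderiv r a) * Tλ p := by
  rw [← LaurentPolynomial.single_eq_C_mul_T, ← LaurentPolynomial.single_eq_C_mul_T,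
    pdL, AddMonoidAlgebra.coeff_single, Finsupp.mapRange_single, AddMonoidAlgebra.ofCoeff_single]

omit [CharZero K] in
lemma lamDlam_single (p : ℤ) (a : A K) :
    lamDlam (Cλ a * Tλ p : L K) = Cλ (p • a) * Tλ p := by
  rw [← LaurentPolynomial.single_eq_C_mul_T, ← LaurentPolynomial.single_eq_C_mul_T,
    lamDlam, AddMonoidAlgebra.coeff_single, Finsupp.sum_single_index]
  · exact AddMonoidAlgebra.ofCoeff_single _ _
  simp

omit [CharZero K] in
lemma smul_single (c : K) (p : ℤ) (a : A K) :
    c • (Cλ a * Tλ p : L K) = Cλ (MvPolynomial.C c * a) * Tλ p := by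
  rw [Algebra.smul_def, map_mul, ← mul_assoc]; rfl

omit [CharZero K] in
lemma Dx_single (π : K) (r : Fin 5) (a : A K) (p : ℤ) :
    Dx π r (Cλ a * Tλ p) =
      Cλ (pderiv r.castSucc a +
          MvPolynomial.C π * tA * (∏ j ∈ Finset.univ.erase r, X j.castSucc) * a) * Tλ p +
        Cλ (MvPolynomial.C π * tA * (5 * X r.castSucc ^ 4) * a) * Tλ (p + 1) := by
  rw [Dx, pdL_single, LaurentPolynomial.T_add]
  simp only [map_mul, map_add, map_ofNat]
  ring

omit [CharZero K] in
lemma Dt_single (π : K) (a : A K) (p : ℤ) :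
    Dt π (Cλ a * Tλ p) =
      Cλ (pderiv 5 a + MvPolynomial.C π * xprod * a) * Tλ p +
        Cλ (MvPolynomial.C π * sumx5 * a) * Tλ (p + 1) := by
  rw [Dt, pdL_single, LaurentPolynomial.T_add]
  simp only [map_mul, map_add]
  ring

omit [CharZero K] in
lemma δop_single (π : K) (a : A K) (p : ℤ) :
    δop π (Cλ a * Tλ p) =
      Cλ (p • a) * Tλ p + Cλ (MvPolynomial.C π * tA * sumx5 * a) * Tλ (p + 1) := by
  rw [δop, lamDlam_single, LaurentPolynomial.T_add]
  simp only [map_mul]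
  ring

lemma pderiv0_P (e c0 c1 c2 c3 c4 : ℕ) :
    pderiv ((0 : Fin 5).castSucc) (P e (c0+1) c1 c2 c3 c4 : A K)
      = MvPolynomial.C ((c0:K)+1) * P e c0 c1 c2 c3 c4 := by
  simp (config := { decide := true }) [P, Derivation.leibniz, Derivation.leibniz_pow,
    pderiv_X, Pi.single_apply, Fin.ext_iff]
  ring

lemma pderiv5_P (e c0 c1 c2 c3 c4 : ℕ) :
    pderiv ((5 : Fin 6)) (P (e+1) c0 c1 c2 c3 c4 : A K)
      = MvPolynomial.C ((e:K)+1) * P e c0 c1 c2 c3 c4 := by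
  simp (config := { decide := true }) [P, Derivation.leibniz, Derivation.leibniz_pow,
    pderiv_X, Pi.single_apply, Fin.ext_iff]
  ring

omit [CharZero K] in
lemma erase0_prod :
    (∏ j ∈ Finset.univ.erase (0 : Fin 5), X j.castSucc : A K)
      = X (1 : Fin 5).castSucc * X (2 : Fin 5).castSucc * X (3 : Fin 5).castSucc *
          X (4 : Fin 5).castSucc := by
  rw [show (Finset.univ.erase (0 : Fin 5)) = {1, 2, 3, 4} from by decide]
  simp (config := { decide := true }) [Finset.prod_insert, Finset.mem_insert]
  ring



set_option maxHeartbeats 1000000 in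
/-- The `i`-relation: modulo the images of the operators `D_r` and `D_t`,
`ω_{(i+1)jknms} = -((5i+s+1)/(5π))·ω_{ijknms} - (1/5)·ω_{ijknm(s+1)}`, and consequently
`δω_{ijknms} = 5i·ω_{ijknms} + 5π·ω_{(i+1)jknms}`. -/
theorem stmt18 (π : K) (hπ : π ≠ 0) (i j k n m s : ℕ) :
    (ωc (i + 1) j k n m s + ((5 * (i : K) + (s : K) + 1) / (5 * π)) • (ωc i j k n m s : L K) +
        ((5 : K)⁻¹) • ωc i j k n m (s + 1) ∈ N π) ∧
    (δop π (ωc i j k n m s) - (5 * (i : K)) • (ωc i j k n m s : L K) -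
        (5 * π) • ωc (i + 1) j k n m s ∈ N π) := by
  set q : A K := P (i+j+k+n+m+s) (5*i+s) (5*j+s) (5*k+s) (5*n+s) (5*m+s) with hq
  set LL : ℤ := (i : ℤ) + j + k + n + m with hLL
  have hω : (ωc i j k n m s : L K) = Cλ q * Tλ LL := ωc_eq i j k n m s
  have hω1 : (ωc (i+1) j k n m s : L K) =
      Cλ (P (i+j+k+n+m+s+1) (5*i+s+5) (5*j+s) (5*k+s) (5*n+s) (5*m+s)) * Tλ (LL + 1) := by
    rw [ωc_eq, show i+1+j+k+n+m+s = i+j+k+n+m+s+1 from by omega,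
      show 5*(i+1)+s = 5*i+s+5 from by omega,
      show ((i+1 : ℕ) : ℤ) + j + k + n + m = LL + 1 from by push_cast [hLL]; ring]
  have hωs : (ωc i j k n m (s+1) : L K) =
      Cλ (P (i+j+k+n+m+s+1) (5*i+s+1) (5*j+s+1) (5*k+s+1) (5*n+s+1) (5*m+s+1)) * Tλ LL := by
    rw [ωc_eq, show i+j+k+n+m+(s+1) = i+j+k+n+m+s+1 from by omega,
      show 5*i+(s+1) = 5*i+s+1 from by omega, show 5*j+(s+1) = 5*j+s+1 from by omega,
      show 5*k+(s+1) = 5*k+s+1 from by omega, show 5*n+(s+1) = 5*n+s+1 from by omega,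
      show 5*m+(s+1) = 5*m+s+1 from by omega]
  set g1 : L K := Cλ (X (0 : Fin 5).castSucc * q) * Tλ LL with hg1
  set g2 : L K := Cλ (tA * q) * Tλ LL with hg2
  have hDxmem : Dx π 0 g1 ∈ N π :=
    Submodule.subset_span (Set.mem_union_left _ (Set.mem_iUnion.2 ⟨0, Set.mem_range_self _⟩))
  have hDtmem : Dt π g2 ∈ N π :=
    Submodule.subset_span (Set.mem_union_right _ (Set.mem_range_self _))
  have key1 : Dx π 0 g1 = (5*(i:K)+s+1) • (ωc i j k n m s : L K)
      + π • ωc i j k n m (s+1) + (5*π) • ωc (i+1) j k n m s := by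
    rw [hg1, Dx_single, hω, hω1, hωs, smul_single, smul_single, smul_single,
      ← add_mul, ← map_add]
    rw [show X (0 : Fin 5).castSucc * q =
        P (i+j+k+n+m+s) (5*i+s+1) (5*j+s) (5*k+s) (5*n+s) (5*m+s) from by
          rw [hq]; simp only [P]; ring, pderiv0_P, erase0_prod]
    refine congrArg₂ (· + ·) (congrArg₂ (· * ·) (congrArg _ ?_) rfl)
      (congrArg₂ (· * ·) (congrArg _ ?_) rfl)
    · push_cast
      simp only [hq, P, tA, map_mul, map_ofNat,
        show ((0:Fin 5).castSucc = (0:Fin 6)) from rfl, show ((1:Fin 5).castSucc = (1:Fin 6)) from rfl,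
        show ((2:Fin 5).castSucc = (2:Fin 6)) from rfl, show ((3:Fin 5).castSucc = (3:Fin 6)) from rfl,
        show ((4:Fin 5).castSucc = (4:Fin 6)) from rfl]
      ring
    · simp only [hq, P, tA, map_mul, map_ofNat]
      ring
  have key3 : Dt π g2 = ((i+j+k+n+m+s : ℕ) + 1 : K) • (ωc i j k n m s : L K)
      + π • ωc i j k n m (s+1)
      + Cλ (MvPolynomial.C π * tA * sumx5 * q) * Tλ (LL + 1) := by
    rw [hg2, Dt_single, hω, hωs, smul_single, smul_single,
      show (tA : A K) * q = P (i+j+k+n+m+s+1) (5*i+s) (5*j+s) (5*k+s) (5*n+s) (5*m+s) from by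
        rw [hq]; simp only [P, tA]; ring, pderiv5_P, ← add_mul, ← map_add]
    refine congrArg₂ (· + ·) (congrArg₂ (· * ·) (congrArg _ ?_) rfl)
      (congrArg₂ (· * ·) (congrArg _ ?_) rfl)
    · push_cast
      simp only [hq, P, tA, xprod, Fin.prod_univ_five]
      ring
    · simp only [hq, P, tA]
      ring
  have key2 : δop π (ωc i j k n m s) = ((i+j+k+n+m : ℕ) : K) • (ωc i j k n m s : L K)
      + Cλ (MvPolynomial.C π * tA * sumx5 * q) * Tλ (LL + 1) := by
    rw [hω, δop_single, smul_single]
    refine congrArg₂ (· + ·) (congrArg₂ (· * ·) (congrArg _ ?_) rfl) rfl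
    rw [zsmul_eq_mul, hLL]
    push_cast
    simp only [map_add, map_natCast]
    try ring
  constructor
  · have hE : ωc (i + 1) j k n m s + ((5 * (i : K) + (s : K) + 1) / (5 * π)) • (ωc i j k n m s : L K)
        + ((5 : K)⁻¹) • ωc i j k n m (s + 1) = ((5*π)⁻¹) • Dx π 0 g1 := by
      rw [key1]
      match_scalars <;> (field_simp; try ring)
    rw [hE]
    exact Submodule.smul_mem _ _ hDxmem
  · have hF : δop π (ωc i j k n m s) - (5 * (i : K)) • (ωc i j k n m s : L K) -
        (5 * π) • ωc (i + 1) j k n m s = Dt π g2 - Dx π 0 g1 := by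
      rw [key1, key2, key3]
      match_scalars <;> (push_cast; ring)
    rw [hF]
    exact Submodule.sub_mem _ hDtmem hDxmem

end
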